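/- For any nonnegative real numbers x_1, ..., x_n, one has (x_1 + ⋯ + x_n)/n ≥ (x_1 x_2 ⋯ x_n)^{1/n} + (1/(n(n−1))) ∑_{1 ≤ i < j ≤ n} (√x_i − √x_j)². -/

import Mathlib

open Finset

/-- Generic pairwise product identity. -/
@[to_additive]
lemma pair_prod_aux {M : Type*} [CommMonoid M] (n : ℕ) (f : Fin n → M) :
    ∏ i, ∏ j ∈ Finset.Ioi i, (f i * f j) = (∏ i, f i) ^ (n - 1) := by
  simp only [Finset.prod_mul_distrib]
  have h2 : (∏ i : Fin n, ∏ _j ∈ Finset.Ioi i, f i)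
      = ∏ i : Fin n, f i ^ (Finset.Ioi i).card := by
    simp
  have h3 : (∏ i : Fin n, ∏ j ∈ Finset.Ioi i, f j)
      = ∏ j : Fin n, ∏ _i ∈ Finset.Iio j, f j :=
    Finset.prod_comm' (by simp)
  rw [h2, h3]
  simp only [Finset.prod_const]
  rw [← Finset.prod_mul_distrib, ← Finset.prod_pow]
  refine Finset.prod_congr rfl fun i _ => ?_
  rw [← pow_add]
  congr 1
  rw [Fin.card_Ioi, Fin.card_Iio]
  have := i.isLt
  omega

theorem quantitative_amgm_pairwise (n : ℕ) (hn : 2 ≤ n) (x : Fin n → ℝ) (hx : ∀ i, 0 ≤ x i) :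
    (∑ i, x i) / n ≥
      (∏ i, x i) ^ ((1 : ℝ) / n) +
        (1 / (n * (n - 1) : ℝ)) *
          ∑ i, ∑ j ∈ Finset.Ioi i, (Real.sqrt (x i) - Real.sqrt (x j)) ^ 2 := by
  classical
  set S : Finset ((_ : Fin n) × Fin n) := Finset.univ.sigma fun i => Finset.Ioi i with hS
  set m : ℕ := S.card with hm
  -- cardinality: 2 * m = n * (n - 1)
  have hcard : 2 * m = n * (n - 1) := by
    have h1 := pair_sum_aux n (fun _ => (1 : ℕ))
    simp only [Finset.sum_const, smul_eq_mul, mul_one, Finset.card_univ,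
      Fintype.card_fin] at h1
    have hm' : m = ∑ i : Fin n, (Finset.Ioi i).card := by
      rw [hm, hS, Finset.card_sigma]
    calc 2 * m = ∑ i : Fin n, (Finset.Ioi i).card * (1 + 1 : ℕ) := by
          rw [hm', Finset.mul_sum]
          refine Finset.sum_congr rfl fun i _ => ?_
          ring
      _ = (n - 1) * n := h1
      _ = n * (n - 1) := mul_comm _ _
  have hn1 : (1 : ℝ) ≤ (n : ℝ) - 1 := by
    have : (2 : ℝ) ≤ n := by exact_mod_cast hn
    linarith
  have hnpos : (0 : ℝ) < n := by positivity
  have hmR : (2 : ℝ) * m = n * ((n : ℝ) - 1) := by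
    have h1 : ((n * (n - 1) : ℕ) : ℝ) = n * ((n : ℝ) - 1) := by
      push_cast [Nat.cast_sub (by omega : 1 ≤ n)]
      ring
    rw [← h1, ← hcard]
    push_cast
    ring
  have hmRpos : (0 : ℝ) < m := by nlinarith
  set P : ℝ := ∏ i, x i with hP
  set T : ℝ := ∑ p ∈ S, Real.sqrt (x p.1 * x p.2) with hT
  have hPnn : 0 ≤ P := Finset.prod_nonneg fun i _ => hx i
  -- AM-GM over pairs
  have hamgm : P ^ ((1 : ℝ) / n) ≤ (1 / (m : ℝ)) * T := by
    have key := Real.geom_mean_le_arith_mean_weighted S (fun _ => 1 / (m : ℝ))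
      (fun p => Real.sqrt (x p.1 * x p.2)) (fun _ _ => by positivity)
      (by rw [Finset.sum_const, ← hm, nsmul_eq_mul, mul_one_div_cancel hmRpos.ne']) (fun p _ => Real.sqrt_nonneg _)
    have hprod : (∏ p ∈ S, Real.sqrt (x p.1 * x p.2) ^ ((1 : ℝ) / m))
        = P ^ ((1 : ℝ) / n) := by
      rw [Real.finset_prod_rpow S _ (fun p _ => Real.sqrt_nonneg _)]
      have h1 : ∏ p ∈ S, Real.sqrt (x p.1 * x p.2) = (P ^ (n - 1)) ^ ((1 : ℝ) / 2) := by
        have e1 : ∏ p ∈ S, Real.sqrt (x p.1 * x p.2)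
            = ∏ p ∈ S, (x p.1 * x p.2) ^ ((1 : ℝ) / 2) :=
          Finset.prod_congr rfl fun p _ => Real.sqrt_eq_rpow _
        have e2 : ∏ p ∈ S, (x p.1 * x p.2)
            = P ^ (n - 1) := by
          rw [hS, Finset.prod_sigma]
          exact pair_prod_aux n x
        rw [e1, Real.finset_prod_rpow S _
          (fun p _ => mul_nonneg (hx _) (hx _)), e2]
      rw [h1, ← Real.rpow_natCast P (n - 1), ← Real.rpow_mul hPnn, ← Real.rpow_mul hPnn]
      congr 1
      have hcast : ((n - 1 : ℕ) : ℝ) = (n : ℝ) - 1 := by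
        push_cast [Nat.cast_sub (by omega : 1 ≤ n)]; ring
      rw [hcast]
      field_simp
      nlinarith
    rw [hprod] at key
    calc P ^ ((1 : ℝ) / n) ≤ ∑ p ∈ S, (1 / (m : ℝ)) * Real.sqrt (x p.1 * x p.2) := key
      _ = (1 / (m : ℝ)) * T := by rw [hT, Finset.mul_sum]
  -- rewrite the pairwise square sum
  have hQ : (∑ i, ∑ j ∈ Finset.Ioi i, (Real.sqrt (x i) - Real.sqrt (x j)) ^ 2)
      = ((n : ℝ) - 1) * (∑ i, x i) - 2 * T := by
    have e1 : ∀ i j : Fin n, (Real.sqrt (x i) - Real.sqrt (x j)) ^ 2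
        = (x i + x j) - 2 * Real.sqrt (x i * x j) := by
      intro i j
      rw [Real.sqrt_mul (hx i)]
      have h1 : Real.sqrt (x i) ^ 2 = x i := Real.sq_sqrt (hx i)
      have h2 : Real.sqrt (x j) ^ 2 = x j := Real.sq_sqrt (hx j)
      nlinarith
    have e2 : (∑ i, ∑ j ∈ Finset.Ioi i, (Real.sqrt (x i) - Real.sqrt (x j)) ^ 2)
        = (∑ i, ∑ j ∈ Finset.Ioi i, (x i + x j))
          - 2 * ∑ i, ∑ j ∈ Finset.Ioi i, Real.sqrt (x i * x j) := by
      rw [Finset.mul_sum, ← Finset.sum_sub_distrib]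
      refine Finset.sum_congr rfl fun i _ => ?_
      rw [Finset.mul_sum, ← Finset.sum_sub_distrib]
      exact Finset.sum_congr rfl fun j _ => e1 i j
    have e3 : (∑ i, ∑ j ∈ Finset.Ioi i, (x i + x j)) = ((n : ℝ) - 1) * ∑ i, x i := by
      have := pair_sum_aux n x
      rw [this, nsmul_eq_mul]
      congr 1
      push_cast [Nat.cast_sub (by omega : 1 ≤ n)]; ring
    have e4 : (∑ i, ∑ j ∈ Finset.Ioi i, Real.sqrt (x i * x j)) = T := by
      rw [hT, hS, Finset.sum_sigma]
    rw [e2, e3, e4]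
  rw [hQ, ge_iff_le]
  have hkey : (1 / (m : ℝ)) * T = 2 * T / ((n : ℝ) * ((n : ℝ) - 1)) := by
    rw [← hmR]; field_simp
  rw [hkey] at hamgm
  have hexp : (1 / ((n : ℝ) * ((n : ℝ) - 1))) * (((n : ℝ) - 1) * (∑ i, x i) - 2 * T)
      = (∑ i, x i) / n - 2 * T / ((n : ℝ) * ((n : ℝ) - 1)) := by
    field_simp
  rw [hexp]
  linarith
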